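/- Let f: [0,∞) → [0,∞) be measurable with M = sup_r f(r) < ∞, and for p > 0 define k_p = (p ∫₀^∞ r^{p−1} f(r) dr)^{1/p}. Then for 0 < p₁ ≤ p₂, k_{p₁}/M^{1/p₁} ≤ k_{p₂}/M^{1/p₂}. -/

import Mathlib

open MeasureTheory Set

lemma stmt13_ind_eq (p R : ℝ) :
    (fun r : ℝ => r ^ (p-1) * (Ioc (0:ℝ) R).indicator (fun _ => (1:ℝ)) r)
      = (Ioc (0:ℝ) R).indicator (fun r => r ^ (p-1)) := by
  funext r
  by_cases h : r ∈ Ioc (0:ℝ) R <;> simp [Set.indicator, h]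

lemma stmt13_ind_integral (p R : ℝ) (hp : 0 < p) (hR : 0 ≤ R) :
    ∫ r in Ioi (0:ℝ), r ^ (p-1) * (Ioc (0:ℝ) R).indicator (fun _ => (1:ℝ)) r = R ^ p / p := by
  rw [stmt13_ind_eq, setIntegral_indicator measurableSet_Ioc]
  have h2 : Ioi (0:ℝ) ∩ Ioc 0 R = Ioc 0 R := by
    ext x; simp (config := {contextual := true}) [and_comm]
  rw [h2, ← intervalIntegral.integral_of_le hR, integral_rpow (Or.inl (by linarith)),
    Real.zero_rpow (by linarith : p - 1 + 1 ≠ 0)]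
  ring_nf

lemma stmt13_ind_integrable (p R : ℝ) (hp : 0 < p) (hR : 0 ≤ R) :
    IntegrableOn (fun r : ℝ => r ^ (p-1) * (Ioc (0:ℝ) R).indicator (fun _ => (1:ℝ)) r) (Ioi 0) := by
  rw [stmt13_ind_eq]
  have h2 : IntegrableOn (fun r : ℝ => r ^ (p-1)) (Ioc 0 R) := by
    have := intervalIntegral.intervalIntegrable_rpow' (a := 0) (b := R) (r := p-1) (by linarith)
    rwa [intervalIntegrable_iff_integrableOn_Ioc_of_le hR] at this
  exact (h2.integrable_indicator measurableSet_Ioc).integrableOn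

/-- one-dimensional moment comparison. If `0 ≤ f ≤ M` on `[0,∞)` and
`k_p = (p ∫₀^∞ r^{p-1} f(r) dr)^{1/p}`, then for `0 < p₁ ≤ p₂`,
`k_{p₁}/M^{1/p₁} ≤ k_{p₂}/M^{1/p₂}`. -/
theorem stmt_13 (f : ℝ → ℝ) (hmeas : Measurable f) (M : ℝ) (hM : 0 < M)
    (hnn : ∀ r ∈ Ici (0 : ℝ), 0 ≤ f r) (hle : ∀ r ∈ Ici (0 : ℝ), f r ≤ M)
    (p₁ p₂ : ℝ) (hp₁ : 0 < p₁) (hp₁₂ : p₁ ≤ p₂)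
    (hint₁ : IntegrableOn (fun r => r ^ (p₁ - 1) * f r) (Ioi 0))
    (hint₂ : IntegrableOn (fun r => r ^ (p₂ - 1) * f r) (Ioi 0)) :
    (p₁ * ∫ r in Ioi (0 : ℝ), r ^ (p₁ - 1) * f r) ^ (1 / p₁) / M ^ (1 / p₁) ≤
      (p₂ * ∫ r in Ioi (0 : ℝ), r ^ (p₂ - 1) * f r) ^ (1 / p₂) / M ^ (1 / p₂) := by
  rcases eq_or_lt_of_le hp₁₂ with rfl | hplt
  · exact le_rfl
  have hp₂ : 0 < p₂ := hp₁.trans hplt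
  set g : ℝ → ℝ := fun r => f r / M with hgdef
  -- basic facts about g
  have hg0 : ∀ r ∈ Ici (0:ℝ), 0 ≤ g r := fun r hr => div_nonneg (hnn r hr) hM.le
  have hg1 : ∀ r ∈ Ici (0:ℝ), g r ≤ 1 := fun r hr => (div_le_one hM).2 (hle r hr)
  -- integrals of r^{p-1} g
  have hJeq : ∀ p : ℝ, (∫ r in Ioi (0:ℝ), r ^ (p - 1) * g r)
      = (∫ r in Ioi (0:ℝ), r ^ (p - 1) * f r) / M := by
    intro p
    rw [← integral_div]
    congr 1; funext r; simp [hgdef, mul_div_assoc]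
  have hJint : ∀ p : ℝ, IntegrableOn (fun r => r ^ (p-1) * f r) (Ioi 0) →
      IntegrableOn (fun r => r ^ (p-1) * g r) (Ioi 0) := by
    intro p hint
    exact (hint.div_const M).congr (Filter.Eventually.of_forall (fun r => by simp [hgdef, mul_div_assoc]))
  have hJint₁ := hJint p₁ hint₁
  have hJint₂ := hJint p₂ hint₂
  set J₁ : ℝ := ∫ r in Ioi (0:ℝ), r ^ (p₁ - 1) * g r with hJ₁
  set J₂ : ℝ := ∫ r in Ioi (0:ℝ), r ^ (p₂ - 1) * g r with hJ₂
  have hJnn : ∀ p : ℝ, 0 ≤ ∫ r in Ioi (0:ℝ), r ^ (p - 1) * g r := by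
    intro p
    apply setIntegral_nonneg measurableSet_Ioi
    intro r hr
    exact mul_nonneg (Real.rpow_nonneg (le_of_lt (mem_Ioi.1 hr)) _) (hg0 r (mem_Ici.2 (le_of_lt (mem_Ioi.1 hr))))
  have hJ₁nn : 0 ≤ J₁ := hJnn p₁
  have hJ₂nn : 0 ≤ J₂ := hJnn p₂
  -- reduce goal to g-form
  have hInn : ∀ p : ℝ, 0 ≤ ∫ r in Ioi (0:ℝ), r ^ (p - 1) * f r := by
    intro p
    apply setIntegral_nonneg measurableSet_Ioi
    intro r hr
    exact mul_nonneg (Real.rpow_nonneg (le_of_lt (mem_Ioi.1 hr)) _) (hnn r (mem_Ici.2 (le_of_lt (mem_Ioi.1 hr))))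
  have hred : ∀ p : ℝ, 0 < p →
      (p * ∫ r in Ioi (0:ℝ), r ^ (p - 1) * f r) ^ (1 / p) / M ^ (1 / p)
        = (p * ∫ r in Ioi (0:ℝ), r ^ (p - 1) * g r) ^ (1 / p) := by
    intro p hp
    rw [hJeq p, ← Real.div_rpow (mul_nonneg hp.le (hInn p)) hM.le, mul_div_assoc]
  rw [hred p₁ hp₁, hred p₂ hp₂]
  -- main argument
  set R : ℝ := (p₁ * J₁) ^ (1 / p₁) with hRdef
  have hR0 : 0 ≤ R := Real.rpow_nonneg (mul_nonneg hp₁.le hJ₁nn) _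
  have hRp₁ : R ^ p₁ = p₁ * J₁ := by
    rw [hRdef, ← Real.rpow_mul (mul_nonneg hp₁.le hJ₁nn), one_div_mul_cancel hp₁.ne',
      Real.rpow_one]
  -- the indicator comparison function
  set q : ℝ := p₂ - p₁ with hq
  have hq0 : 0 < q := by simp only [hq]; linarith
  set ind : ℝ → ℝ := fun r => (Ioc (0:ℝ) R).indicator (fun _ => (1:ℝ)) r with hind
  have hint_ind₁ := stmt13_ind_integrable p₁ R hp₁ hR0
  have hint_ind₂ := stmt13_ind_integrable p₂ R hp₂ hR0
  have hsub₁ : IntegrableOn (fun r => r ^ (p₁-1) * (g r - ind r)) (Ioi 0) := by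
    have := hJint₁.sub hint_ind₁
    exact this.congr_fun (fun r _ => by simp only [Pi.sub_apply, hind, mul_sub]) measurableSet_Ioi
  have hsub₂ : IntegrableOn (fun r => r ^ (p₂-1) * (g r - ind r)) (Ioi 0) := by
    have := hJint₂.sub hint_ind₂
    exact this.congr_fun (fun r _ => by simp only [Pi.sub_apply, hind, mul_sub]) measurableSet_Ioi
  have key : ∫ r in Ioi (0:ℝ), R ^ q * (r ^ (p₁-1) * (g r - ind r))
      ≤ ∫ r in Ioi (0:ℝ), r ^ (p₂-1) * (g r - ind r) := by
    apply setIntegral_mono_on (hsub₁.const_mul _) hsub₂ measurableSet_Ioi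
    intro r hr
    have hr' : (0:ℝ) < r := hr
    have hsplit : r ^ (p₂-1) = r ^ q * r ^ (p₁-1) := by
      rw [← Real.rpow_add hr']; congr 1; simp only [hq]; ring
    rw [hsplit, mul_assoc]
    by_cases hrR : r ≤ R
    · have hmem : r ∈ Ioc (0:ℝ) R := Set.mem_Ioc.2 ⟨hr', hrR⟩
      have hind1 : ind r = 1 := by
        simp only [hind]; rw [Set.indicator_of_mem hmem]
      have hX : r ^ (p₁-1) * (g r - ind r) ≤ 0 := by
        apply mul_nonpos_of_nonneg_of_nonpos (Real.rpow_nonneg hr'.le _)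
        rw [hind1]; linarith [hg1 r hr'.le]
      exact mul_le_mul_of_nonpos_right (Real.rpow_le_rpow hr'.le hrR hq0.le) hX
    · push_neg at hrR
      have hind0 : ind r = 0 := by
        simp only [hind]
        exact Set.indicator_of_notMem (fun h => absurd h.2 (not_le.2 hrR)) _
      have hX : 0 ≤ r ^ (p₁-1) * (g r - ind r) := by
        apply mul_nonneg (Real.rpow_nonneg hr'.le _)
        rw [hind0]; simpa using hg0 r hr'.le
      exact mul_le_mul_of_nonneg_right (Real.rpow_le_rpow hR0 hrR.le hq0.le) hX
  -- compute both sides of `key`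
  have hsplit_int : ∀ p : ℝ, 0 < p → IntegrableOn (fun r => r ^ (p-1) * g r) (Ioi 0) →
      (∫ r in Ioi (0:ℝ), r ^ (p-1) * (g r - ind r))
        = (∫ r in Ioi (0:ℝ), r ^ (p-1) * g r) - R ^ p / p := by
    intro p hp hI
    have : (fun r : ℝ => r ^ (p-1) * (g r - ind r))
        = fun r => r ^ (p-1) * g r - r ^ (p-1) * ind r := by
      funext r; ring
    rw [this, integral_sub hI (stmt13_ind_integrable p R hp hR0),
      stmt13_ind_integral p R hp hR0]
  have hL : ∫ r in Ioi (0:ℝ), R ^ q * (r ^ (p₁-1) * (g r - ind r)) = 0 := by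
    rw [integral_const_mul, hsplit_int p₁ hp₁ hJint₁, ← hJ₁, hRp₁]
    rw [mul_div_cancel_left₀ _ hp₁.ne']
    ring
  have hR_le : R ^ p₂ ≤ p₂ * J₂ := by
    have h2 := key
    rw [hL, hsplit_int p₂ hp₂ hJint₂, ← hJ₂] at h2
    have : R ^ p₂ / p₂ ≤ J₂ := by linarith
    calc R ^ p₂ = p₂ * (R ^ p₂ / p₂) := by field_simp
      _ ≤ p₂ * J₂ := by
        exact mul_le_mul_of_nonneg_left this hp₂.le
  calc R = R ^ (p₂ * (1/p₂)) := by
        rw [mul_one_div_cancel hp₂.ne', Real.rpow_one]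
    _ = (R ^ p₂) ^ (1/p₂) := Real.rpow_mul hR0 _ _
    _ ≤ (p₂ * J₂) ^ (1/p₂) :=
        Real.rpow_le_rpow (Real.rpow_nonneg hR0 _) hR_le (by positivity)
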